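/- arXiv:1909.01061 — 4 statements merged into one kernel-verified Lean document; each statement's English description precedes it below -/
import Mathlib

section
/- Let Ξ and 𝔖 be two subsets of ℝ, and let k > j ≥ 0 be integers. If Ξ has Fuller order at least k and 𝔖 has Fuller order at most j, then the set difference Ξ \ 𝔖 has Fuller order at least k − j − 1. -/
/-- The set of isolated points of a subset of `ℝ`: points of the set having a
neighborhood whose intersection with the set is just that point. -/
def isolatedPoints (X : Set ℝ) : Set ℝ :=
  {x ∈ X | ∃ U ∈ nhds x, U ∩ X = {x}}

/-- `fullerResidual X j = X \ (X₀ ∪ … ∪ X_{j-1})`, where `X_i` are the iterated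
sets of isolated points. -/
def fullerResidual (X : Set ℝ) : ℕ → Set ℝ
  | 0 => X
  | n + 1 => fullerResidual X n \ isolatedPoints (fullerResidual X n)

/-- `fullerLayer X j = X_j`, the set of isolated points of `X \ (X₀ ∪ … ∪ X_{j-1})`. -/
def fullerLayer (X : Set ℝ) (n : ℕ) : Set ℝ :=
  isolatedPoints (fullerResidual X n)

open Filter Topology Set

lemma mem_isolatedPoints_iff {S : Set ℝ} {x : ℝ} (hx : x ∈ S) :
    x ∈ isolatedPoints S ↔ ¬ AccPt x (𝓟 S) := by
  rw [accPt_iff_nhds]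
  push_neg
  constructor
  · rintro ⟨-, U, hU, hUS⟩
    refine ⟨U, hU, fun y hy => ?_⟩
    have : y ∈ ({x} : Set ℝ) := hUS ▸ hy
    simpa using this
  · rintro ⟨U, hU, hall⟩
    refine ⟨hx, U, hU, Set.Subset.antisymm (fun y hy => hall y hy) ?_⟩
    rintro y rfl
    exact ⟨mem_of_mem_nhds hU, hx⟩

lemma accPt_of_not_isolated {S : Set ℝ} {x : ℝ} (hx : x ∈ S)
    (h : x ∉ isolatedPoints S) : AccPt x (𝓟 S) := by
  by_contra hc
  exact h ((mem_isolatedPoints_iff hx).mpr hc)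

lemma accPt_union {S T : Set ℝ} {x : ℝ} :
    AccPt x (𝓟 (S ∪ T)) ↔ AccPt x (𝓟 S) ∨ AccPt x (𝓟 T) := by
  rw [← Filter.sup_principal, accPt_sup]

lemma accPt_trans {S T : Set ℝ} {x : ℝ} (h : AccPt x (𝓟 S))
    (hS : ∀ y ∈ S, y ≠ x → AccPt y (𝓟 T)) : AccPt x (𝓟 T) := by
  rw [accPt_iff_nhds] at h ⊢
  intro U hU
  obtain ⟨V, hVU, hVo, hxV⟩ := mem_nhds_iff.mp hU
  obtain ⟨y, ⟨hyV, hyS⟩, hyx⟩ := h V (hVo.mem_nhds hxV)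
  have hVx : IsOpen (V \ {x}) := hVo.sdiff isClosed_singleton
  have hyVx : y ∈ V \ {x} := ⟨hyV, hyx⟩
  obtain ⟨z, ⟨⟨hzV, hzx⟩, hzT⟩, hzy⟩ :=
    accPt_iff_nhds.mp (hS y hyS hyx) (V \ {x}) (hVx.mem_nhds hyVx)
  exact ⟨z, ⟨hVU hzV, hzT⟩, hzx⟩

lemma residual_mono {X Y : Set ℝ} (h : X ⊆ Y) :
    ∀ n, fullerResidual X n ⊆ fullerResidual Y n := by
  intro n
  induction n with
  | zero => exact h
  | succ n ih =>
    rintro x ⟨hx1, hx2⟩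
    have hy : x ∈ fullerResidual Y n := ih hx1
    have hacc : AccPt x (𝓟 (fullerResidual X n)) := accPt_of_not_isolated hx1 hx2
    refine ⟨hy, fun hiso => ?_⟩
    exact (mem_isolatedPoints_iff hy).mp hiso (hacc.mono (Filter.principal_mono.mpr ih))

lemma residual_shift (X : Set ℝ) :
    ∀ n, fullerResidual X (n + 1) = fullerResidual (fullerResidual X 1) n := by
  intro n
  induction n with
  | zero => rfl
  | succ n ih =>
    show fullerResidual X (n + 1) \ isolatedPoints (fullerResidual X (n + 1)) = _
    rw [ih]
    rfl

lemma discrete_residual_one {D : Set ℝ} (hD : ∀ d ∈ D, ¬ AccPt d (𝓟 D)) :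
    fullerResidual D 1 = ∅ :=
  Set.diff_eq_empty.mpr (fun d hd => (mem_isolatedPoints_iff hd).mpr (hD d hd))

/-- Core lemma: if `D` is discrete, the "new" points of the first residual of
`A ∪ D` (those outside the first residual of `A`) form a discrete set. -/
lemma core_discrete (A D : Set ℝ) (hD : ∀ d ∈ D, ¬ AccPt d (𝓟 D)) :
    ∀ x ∈ fullerResidual (A ∪ D) 1 \ fullerResidual A 1,
      ¬ AccPt x (𝓟 (fullerResidual (A ∪ D) 1 \ fullerResidual A 1)) := by
  set X := fullerResidual (A ∪ D) 1 \ fullerResidual A 1 with hX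
  -- points of A in X are not accumulation points of A
  have hwA : ∀ w ∈ X, w ∈ A → ¬ AccPt w (𝓟 A) := by
    rintro w ⟨hw1, hw2⟩ hwa hacc
    exact hw2 ⟨hwa, fun hiso => (mem_isolatedPoints_iff hwa).mp hiso hacc⟩
  -- every point of X is an accumulation point of A or of D
  have hwC : ∀ w ∈ X, AccPt w (𝓟 A) ∨ AccPt w (𝓟 D) := by
    rintro w ⟨⟨hw1, hw2⟩, -⟩
    exact accPt_union.mp (accPt_of_not_isolated hw1 hw2)
  have hA : ∀ w ∈ X, w ∈ A → AccPt w (𝓟 D) := fun w hw hwa =>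
    (hwC w hw).resolve_left (hwA w hw hwa)
  have hDpt : ∀ w ∈ X, w ∉ A → w ∈ D ∧ AccPt w (𝓟 A) := by
    intro w hw hwa
    have hwd : w ∈ D := (hw.1.1).resolve_left hwa
    exact ⟨hwd, (hwC w hw).resolve_right (hD w hwd)⟩
  intro x hx hacc
  have hsplit : X = (X ∩ A) ∪ (X \ A) := (Set.inter_union_diff X A).symm
  rw [hsplit] at hacc
  rcases accPt_union.mp hacc with h1 | h2
  · by_cases hxA : x ∈ A
    · exact hwA x hx hxA (h1.mono (Filter.principal_mono.mpr Set.inter_subset_right))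
    · have hxD : x ∈ D := (hx.1.1).resolve_left hxA
      have : AccPt x (𝓟 D) :=
        accPt_trans h1 (fun y hy _ => hA y hy.1 hy.2)
      exact hD x hxD this
  · by_cases hxD : x ∈ D
    · have : AccPt x (𝓟 D) :=
        h2.mono (Filter.principal_mono.mpr (fun w hw => (hDpt w hw.1 hw.2).1))
      exact hD x hxD this
    · have hxA : x ∈ A := (hx.1.1).resolve_right hxD
      have : AccPt x (𝓟 A) :=
        accPt_trans h2 (fun y hy _ => (hDpt y hy.1 hy.2).2)
      exact hwA x hx hxA this

lemma union_discrete_empty :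
    ∀ (a : ℕ) (A D : Set ℝ), fullerResidual A a = ∅ →
      (∀ d ∈ D, ¬ AccPt d (𝓟 D)) → fullerResidual (A ∪ D) (a + 1) = ∅ := by
  intro a
  induction a with
  | zero =>
    intro A D hA hD
    have hAe : A = ∅ := hA
    rw [hAe, Set.empty_union]
    exact discrete_residual_one hD
  | succ a ih =>
    intro A D hA hD
    rw [show a + 1 + 1 = (a + 1) + 1 from rfl, residual_shift]
    set X := fullerResidual (A ∪ D) 1 \ fullerResidual A 1 with hXdef
    have hsub : fullerResidual (A ∪ D) 1 ⊆ fullerResidual A 1 ∪ X := by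
      intro w hw
      by_cases h : w ∈ fullerResidual A 1
      · exact Or.inl h
      · exact Or.inr ⟨hw, h⟩
    have hA1 : fullerResidual (fullerResidual A 1) a = ∅ := by
      rw [← residual_shift]; exact hA
    have h1 : fullerResidual (fullerResidual A 1 ∪ X) (a + 1) = ∅ :=
      ih (fullerResidual A 1) X hA1 (core_discrete A D hD)
    exact Set.subset_empty_iff.mp (h1 ▸ residual_mono hsub (a + 1))

lemma union_residual_empty :
    ∀ (b a : ℕ) (A B : Set ℝ), fullerResidual A a = ∅ →
      fullerResidual B b = ∅ → fullerResidual (A ∪ B) (a + b) = ∅ := by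
  intro b
  induction b with
  | zero =>
    intro a A B hA hB
    have hBe : B = ∅ := hB
    rw [hBe, Set.union_empty]
    exact hA
  | succ b ih =>
    intro a A B hA hB
    have hiso : ∀ d ∈ isolatedPoints B, ¬ AccPt d (𝓟 (isolatedPoints B)) := by
      intro d hd hacc
      have hdB : d ∈ B := hd.1
      have : AccPt d (𝓟 B) := hacc.mono (Filter.principal_mono.mpr (fun y hy => hy.1))
      exact (mem_isolatedPoints_iff hdB).mp hd this
    have h1 : fullerResidual (A ∪ isolatedPoints B) (a + 1) = ∅ :=
      union_discrete_empty a A _ hA hiso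
    have h2 : fullerResidual (fullerResidual B 1) b = ∅ := by
      rw [← residual_shift]; exact hB
    have h3 := ih (a + 1) (A ∪ isolatedPoints B) (fullerResidual B 1) h1 h2
    have hsub : A ∪ B ⊆ (A ∪ isolatedPoints B) ∪ fullerResidual B 1 := by
      intro w hw
      rcases hw with hw | hw
      · exact Or.inl (Or.inl hw)
      · by_cases h : w ∈ isolatedPoints B
        · exact Or.inl (Or.inr h)
        · exact Or.inr ⟨hw, h⟩
    have h4 := residual_mono hsub (a + 1 + b)
    rw [h3] at h4
    rw [show a + (b + 1) = a + 1 + b from by omega]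
    exact Set.subset_empty_iff.mp h4

lemma residual_eq_diff (X : Set ℝ) :
    ∀ n, fullerResidual X n = X \ ⋃ i ∈ Finset.range n, fullerLayer X i := by
  intro n
  induction n with
  | zero => simp [fullerResidual]
  | succ n ih =>
    show fullerResidual X n \ isolatedPoints (fullerResidual X n) = _
    rw [Finset.range_add_one, Finset.set_biUnion_insert, Set.union_comm, ← Set.diff_diff, ← ih]
    rfl

/-- If `Ξ` has Fuller order at least `k` and `𝔖` has Fuller order at most `j`,
with `k > j ≥ 0`, then `Ξ \ 𝔖` has Fuller order at least `k - j - 1`. -/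
theorem fuller_order_diff (Ξ 𝔖 : Set ℝ) (k j : ℕ) (hkj : j < k)
    (hΞ : (Ξ \ ⋃ i ∈ Finset.range k, fullerLayer Ξ i).Nonempty)
    (h𝔖 : 𝔖 = ⋃ i ∈ Finset.range (j + 1), fullerLayer 𝔖 i) :
    ((Ξ \ 𝔖) \ ⋃ i ∈ Finset.range (k - j - 1), fullerLayer (Ξ \ 𝔖) i).Nonempty := by
  by_contra hc
  rw [Set.not_nonempty_iff_eq_empty, ← residual_eq_diff] at hc
  rw [← residual_eq_diff] at hΞ
  have h𝔖e : fullerResidual 𝔖 (j + 1) = ∅ := by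
    rw [residual_eq_diff, ← h𝔖, Set.diff_self]
  have h := union_residual_empty (j + 1) (k - j - 1) (Ξ \ 𝔖) 𝔖 hc h𝔖e
  rw [show k - j - 1 + (j + 1) = k from by omega] at h
  have hsub : Ξ ⊆ (Ξ \ 𝔖) ∪ 𝔖 := by
    intro x hx
    by_cases hs : x ∈ 𝔖
    · exact Or.inr hs
    · exact Or.inl ⟨hx, hs⟩
  have h5 := residual_mono hsub k
  rw [h] at h5
  obtain ⟨x, hx⟩ := hΞ
  exact h5 hx
end

section
/- Let k ≥ 1 and j ≥ 0 be integers and let Ξ ⊆ ℝ be the union of k sets Ξ¹, …, Ξᵏ. If every Ξⁱ, i ∈ {1, …, k}, has Fuller order at most j, then Ξ has Fuller order at most k(j+1). -/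
open Set

lemma iso_subset (X : Set ℝ) : isolatedPoints X ⊆ X := fun _ hx => hx.1

lemma res_subset (X : Set ℝ) : ∀ n, fullerResidual X n ⊆ X
  | 0 => subset_rfl
  | n + 1 => Set.diff_subset.trans (res_subset X n)

lemma res_anti {X : Set ℝ} {m n : ℕ} (h : m ≤ n) :
    fullerResidual X n ⊆ fullerResidual X m := by
  induction n, h using Nat.le_induction with
  | base => exact subset_rfl
  | succ n hn ih => exact Set.diff_subset.trans ih

lemma iso_of_subset {A B : Set ℝ} {x : ℝ} (hAB : A ⊆ B) (hxA : x ∈ A)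
    (hx : x ∈ isolatedPoints B) : x ∈ isolatedPoints A := by
  obtain ⟨-, U, hU, hUeq⟩ := hx
  refine ⟨hxA, U, hU, Subset.antisymm ?_ ?_⟩
  · exact (inter_subset_inter_right U hAB).trans hUeq.subset
  · rw [Set.singleton_subset_iff]
    have hxU : x ∈ U := by
      have h : x ∈ U ∩ B := by rw [hUeq]; rfl
      exact h.1
    exact ⟨hxU, hxA⟩

lemma res_mono {A B : Set ℝ} (h : A ⊆ B) : ∀ n, fullerResidual A n ⊆ fullerResidual B n := by
  intro n
  induction n with
  | zero => exact h
  | succ n ih =>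
    rintro x ⟨hx1, hx2⟩
    refine ⟨ih hx1, fun hiso => hx2 (iso_of_subset ih hx1 hiso)⟩

lemma iso_inter {X U : Set ℝ} (hU : IsOpen U) :
    isolatedPoints X ∩ U = isolatedPoints (X ∩ U) ∩ U := by
  apply Subset.antisymm
  · rintro x ⟨hx, hxU⟩
    exact ⟨iso_of_subset inter_subset_left ⟨hx.1, hxU⟩ hx, hxU⟩
  · rintro x ⟨⟨⟨hxX, -⟩, V, hV, hVeq⟩, hxU⟩
    refine ⟨⟨hxX, V ∩ U, Filter.inter_mem hV (hU.mem_nhds hxU), ?_⟩, hxU⟩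
    rw [show V ∩ U ∩ X = V ∩ (X ∩ U) by
        ext y; simp only [mem_inter_iff]; tauto, hVeq]

lemma res_inter {X U : Set ℝ} (hU : IsOpen U) :
    ∀ n, fullerResidual X n ∩ U = fullerResidual (X ∩ U) n ∩ U := by
  intro n
  induction n with
  | zero =>
    show X ∩ U = (X ∩ U) ∩ U
    rw [inter_assoc, inter_self]
  | succ n ih =>
    show (fullerResidual X n \ isolatedPoints (fullerResidual X n)) ∩ U
      = (fullerResidual (X ∩ U) n \ isolatedPoints (fullerResidual (X ∩ U) n)) ∩ U
    have key : ∀ S T W : Set ℝ, (S \ T) ∩ W = (S ∩ W) \ (T ∩ W) := by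
      intro S T W; ext y; simp only [mem_inter_iff, mem_diff]; tauto
    rw [key, key, ih]
    congr 1
    rw [iso_inter hU, iso_inter (X := fullerResidual (X ∩ U) n) hU]
    have h1 : fullerResidual X n ∩ U = fullerResidual (X ∩ U) n ∩ U := ih
    have h2 : fullerResidual X n ∩ U ∩ U = fullerResidual (X ∩ U) n ∩ U ∩ U := by rw [h1]
    calc isolatedPoints (fullerResidual X n ∩ U) ∩ U
        = isolatedPoints (fullerResidual X n ∩ U ∩ U) ∩ U := by rw [inter_assoc, inter_self]
      _ = isolatedPoints (fullerResidual (X ∩ U) n ∩ U ∩ U) ∩ U := by rw [h2]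
      _ = isolatedPoints (fullerResidual (X ∩ U) n ∩ U) ∩ U := by rw [inter_assoc, inter_self]

lemma res_insert (x : ℝ) (C : Set ℝ) :
    ∀ n, fullerResidual (insert x C) n ⊆ insert x (fullerResidual C n) := by
  intro n
  induction n with
  | zero => exact subset_rfl
  | succ n ih =>
    rintro y ⟨hy1, hy2⟩
    rcases ih hy1 with rfl | hyC
    · exact mem_insert _ _
    by_cases hyx : y = x
    · exact hyx ▸ mem_insert _ _
    refine mem_insert_of_mem _ ⟨hyC, fun hiso => hy2 ?_⟩
    obtain ⟨-, V, hV, hVeq⟩ := hiso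
    refine ⟨hy1, V ∩ {x}ᶜ, Filter.inter_mem hV (IsOpen.mem_nhds isOpen_compl_singleton hyx), ?_⟩
    apply Subset.antisymm
    · rintro z ⟨⟨hzV, hzx⟩, hzres⟩
      rcases ih hzres with rfl | hz
      · exact absurd rfl hzx
      · have : z ∈ V ∩ fullerResidual C n := ⟨hzV, hz⟩
        rw [hVeq] at this; exact this
    · rw [Set.singleton_subset_iff]
      have hyV : y ∈ V := by
        have h : y ∈ V ∩ fullerResidual C n := by rw [hVeq]; rfl
        exact h.1
      exact ⟨⟨hyV, hyx⟩, hy1⟩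

lemma res_one_of_subsingleton {Y : Set ℝ} {x : ℝ} (h : Y ⊆ {x}) :
    fullerResidual Y 1 = ∅ := by
  have : Y ⊆ isolatedPoints Y := by
    intro y hy
    have hyx : y = x := h hy
    refine ⟨hy, univ, Filter.univ_mem, ?_⟩
    rw [univ_inter]
    apply Subset.antisymm
    · intro z hz; have := h hz; rw [this, hyx]; rfl
    · rw [Set.singleton_subset_iff]; exact hy
  show Y \ isolatedPoints Y = ∅
  exact diff_eq_empty.mpr this

lemma exists_iso_layer {A : Set ℝ} {x : ℝ} (a : ℕ) (hxA : x ∈ A)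
    (hx : x ∉ fullerResidual A a) : ∃ m < a, x ∈ isolatedPoints (fullerResidual A m) := by
  induction a with
  | zero => exact absurd hxA hx
  | succ a ih =>
    by_cases h : x ∈ fullerResidual A a
    · refine ⟨a, Nat.lt_succ_self a, ?_⟩
      by_contra hiso
      exact hx ⟨h, hiso⟩
    · obtain ⟨m, hm, hmi⟩ := ih h
      exact ⟨m, hm.trans (Nat.lt_succ_self a), hmi⟩

lemma key_aux (N a b : ℕ) (A B : Set ℝ) (hab : a + b = N + 1) (ha : 0 < a)
    (IH : ∀ M, M < N + 1 → ∀ a' b' (A' B' : Set ℝ), a' + b' = M →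
      fullerResidual A' a' = ∅ → fullerResidual B' b' = ∅ → fullerResidual (A' ∪ B') M = ∅)
    (hA : fullerResidual A a = ∅) (hB : fullerResidual B b = ∅)
    (x : ℝ) (hx : x ∈ fullerResidual (A ∪ B) N) (hxA : x ∈ A) :
    x ∈ isolatedPoints (fullerResidual (A ∪ B) N) := by
  obtain ⟨m, hm, hiso⟩ := exists_iso_layer a hxA (by rw [hA]; exact notMem_empty x)
  obtain ⟨-, U, hU, hUeq⟩ := hiso
  obtain ⟨V, hVU, hVopen, hxV⟩ := mem_nhds_iff.mp hU
  set A' := (A ∩ V) \ {x} with hA'def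
  have hA'res : fullerResidual A' m = ∅ := by
    have h1 : fullerResidual (A ∩ V) m ⊆ {x} := by
      have hs : fullerResidual (A ∩ V) m ⊆ V := (res_subset _ _).trans inter_subset_right
      have : fullerResidual (A ∩ V) m ∩ V = fullerResidual A m ∩ V := (res_inter hVopen m).symm
      intro y hy
      have hyV : y ∈ fullerResidual A m ∩ V := by rw [← this]; exact ⟨hy, hs hy⟩
      have : y ∈ U ∩ fullerResidual A m := ⟨hVU hyV.2, hyV.1⟩
      rw [hUeq] at this; exact this
    apply eq_empty_iff_forall_notMem.mpr
    intro y hy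
    have hyx : y = x := h1 (res_mono (diff_subset) m hy)
    have : y ∈ A' := res_subset _ _ hy
    exact this.2 (by rw [hyx]; rfl)
  have hB'res : fullerResidual (B ∩ V) b = ∅ :=
    eq_empty_of_subset_empty ((res_mono inter_subset_left b).trans hB.subset)
  have hmbN : m + b ≤ N := by omega
  have h1 : fullerResidual (A' ∪ (B ∩ V)) (m + b) = ∅ :=
    IH (m + b) (by omega) m b A' (B ∩ V) rfl hA'res hB'res
  have h2 : (A ∪ B) ∩ V ⊆ insert x (A' ∪ (B ∩ V)) := by
    rintro y ⟨hy, hyV⟩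
    by_cases hyx : y = x
    · exact hyx ▸ mem_insert _ _
    rcases hy with hyA | hyB
    · exact mem_insert_of_mem _ (Or.inl ⟨⟨hyA, hyV⟩, hyx⟩)
    · exact mem_insert_of_mem _ (Or.inr ⟨hyB, hyV⟩)
  have h3 : fullerResidual ((A ∪ B) ∩ V) (m + b) ⊆ {x} := by
    refine ((res_mono h2 (m + b)).trans (res_insert x _ (m + b))).trans ?_
    rw [h1]
    intro y hy
    rcases hy with rfl | hy
    · rfl
    · exact absurd hy (notMem_empty y)
  have h4 : fullerResidual (A ∪ B) N ∩ V ⊆ {x} := by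
    intro y hy
    have hy' : y ∈ fullerResidual (A ∪ B) (m + b) ∩ V := ⟨res_anti hmbN hy.1, hy.2⟩
    rw [res_inter hVopen] at hy'
    exact h3 hy'.1
  refine ⟨hx, V, hVopen.mem_nhds hxV, Subset.antisymm ?_ ?_⟩
  · intro y hy; exact h4 ⟨hy.2, hy.1⟩
  · rw [Set.singleton_subset_iff]; exact ⟨hxV, hx⟩

lemma res_union_two : ∀ N a b (A B : Set ℝ), a + b = N →
    fullerResidual A a = ∅ → fullerResidual B b = ∅ → fullerResidual (A ∪ B) N = ∅ := by
  intro N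
  induction N using Nat.strong_induction_on with
  | _ N IH =>
  intro a b A B hab hA hB
  rcases Nat.eq_zero_or_pos a with rfl | ha
  · have : A = ∅ := hA
    subst this
    rw [empty_union]
    rwa [show N = b by omega]
  rcases Nat.eq_zero_or_pos b with rfl | hb
  · have : B = ∅ := hB
    subst this
    rw [union_empty]
    have : a = N := by omega
    exact this ▸ hA
  obtain ⟨P, rfl⟩ : ∃ P, N = P + 1 := ⟨N - 1, by omega⟩
  show fullerResidual (A ∪ B) P \ isolatedPoints (fullerResidual (A ∪ B) P) = ∅
  apply diff_eq_empty.mpr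
  intro x hx
  rcases res_subset _ _ hx with hxA | hxB
  · exact key_aux P a b A B hab ha IH hA hB x hx hxA
  · rw [union_comm] at hx ⊢
    exact key_aux P b a B A ((by omega : b + a = P + 1)) hb
      (fun M hM a' b' A' B' h1 h2 h3 => IH M hM a' b' A' B' h1 h2 h3) hB hA x hx hxB

lemma res_iUnion : ∀ (k : ℕ) (F : Fin k → Set ℝ) (a : ℕ),
    (∀ i, fullerResidual (F i) a = ∅) → fullerResidual (⋃ i, F i) (k * a) = ∅ := by
  intro k
  induction k with
  | zero =>
    intro F a _
    simp only [Nat.zero_mul]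
    show (⋃ i, F i) = ∅
    exact iUnion_of_empty F
  | succ k ih =>
    intro F a hF
    have hsplit : (⋃ i, F i) = F 0 ∪ ⋃ i : Fin k, F i.succ := by
      apply Subset.antisymm
      · rintro y hy
        obtain ⟨i, hi⟩ := mem_iUnion.mp hy
        rcases Fin.eq_zero_or_eq_succ i with rfl | ⟨i', rfl⟩
        · exact Or.inl hi
        · exact Or.inr (mem_iUnion.mpr ⟨i', hi⟩)
      · rintro y (hy | hy)
        · exact mem_iUnion.mpr ⟨0, hy⟩
        · obtain ⟨i, hi⟩ := mem_iUnion.mp hy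
          exact mem_iUnion.mpr ⟨i.succ, hi⟩
    rw [hsplit]
    exact res_union_two ((k + 1) * a) a (k * a) _ _ (by ring) (hF 0)
      (ih (fun i => F i.succ) a (fun i => hF i.succ))

lemma res_eq_diff (X : Set ℝ) : ∀ n,
    fullerResidual X n = X \ ⋃ l ∈ Finset.range n, fullerLayer X l := by
  intro n
  induction n with
  | zero => simp [fullerResidual]
  | succ n ih =>
    have hstep : fullerResidual X (n + 1) = fullerResidual X n \ fullerLayer X n := rfl
    rw [hstep, ih, Finset.range_add_one]
    ext y
    simp only [mem_diff, Finset.set_biUnion_insert, mem_union]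
    tauto

/-- If `Ξ` is the union of `k ≥ 1` sets each of Fuller order at most `j`, then
`Ξ` has Fuller order at most `k * (j + 1)`. -/
theorem fuller_order_union (k j : ℕ) (hk : 1 ≤ k) (F : Fin k → Set ℝ) (Ξ : Set ℝ)
    (hΞ : Ξ = ⋃ i, F i)
    (hF : ∀ i, F i = ⋃ l ∈ Finset.range (j + 1), fullerLayer (F i) l) :
    Ξ = ⋃ l ∈ Finset.range (k * (j + 1) + 1), fullerLayer Ξ l := by
  have hFres : ∀ i, fullerResidual (F i) (j + 1) = ∅ := by
    intro i
    rw [res_eq_diff, ← hF i, diff_self]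
  have hres : fullerResidual Ξ (k * (j + 1)) = ∅ := by
    rw [hΞ]; exact res_iUnion k F (j + 1) hFres
  have hres' : fullerResidual Ξ (k * (j + 1) + 1) = ∅ :=
    eq_empty_of_subset_empty ((res_anti (Nat.le_succ _)).trans hres.subset)
  rw [res_eq_diff] at hres'
  apply Subset.antisymm
  · exact diff_eq_empty.mp hres'
  · intro y hy
    simp only [mem_iUnion] at hy
    obtain ⟨l, _, hl⟩ := hy
    exact res_subset Ξ l (iso_subset _ hl)
end

section
/- For every m ≥ 1 there exist a multivariate polynomial P, homogeneous of degree m, and a family of multivariate polynomials Q_{ij} (1 ≤ i, j ≤ 2m), each homogeneous of degree m − 1, all in the entries of a 2m × 2m matrix and with real coefficients, such that for every skew-symmetric A ∈ M_{2m}(ℝ): (1) det A = (P(A))²; (2) the matrix Q(A) with (i,j) entry Q_{ij}(A) is skew-symmetric; and (3) Q(A) · A = P(A) · Id_{2m}. -/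
open Matrix


/-- An equiv putting two given distinct indices first. -/
lemma pf_exists_equiv {n : ℕ} (i j : Fin n) (hij : i ≠ j) :
    ∃ e : (Fin 2 ⊕ Fin (n - 2)) ≃ Fin n, e (Sum.inl 0) = i ∧ e (Sum.inl 1) = j := by
  have h2n : 2 ≤ n := by
    by_contra h
    push_neg at h
    interval_cases n
    · exact i.elim0
    · exact hij (Subsingleton.elim i j)
  set q : (Fin 2 ⊕ Fin (n - 2)) ≃ Fin n :=
    finSumFinEquiv.trans (finCongr (by omega)) with hq
  set i₀ := q (Sum.inl 0) with hi₀
  set j₀ := q (Sum.inl 1) with hj₀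
  have hij₀ : i₀ ≠ j₀ := by
    simp only [hi₀, hj₀, ne_eq, EmbeddingLike.apply_eq_iff_eq]
    simp
  set π₁ := Equiv.swap i₀ i with hπ₁
  set j₁ := π₁ j₀ with hj₁
  have hπ₁i₀ : π₁ i₀ = i := Equiv.swap_apply_left _ _
  have hij₁ : i ≠ j₁ := by
    intro h
    have h2 : π₁ i = π₁ j₁ := by rw [h]
    rw [Equiv.swap_apply_right, hj₁, Equiv.swap_apply_self] at h2
    exact hij₀ h2
  set π₂ := Equiv.swap j₁ j with hπ₂
  refine ⟨q.trans (π₁.trans π₂), ?_, ?_⟩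
  · show π₂ (π₁ i₀) = i
    rw [hπ₁i₀]
    exact Equiv.swap_apply_of_ne_of_ne hij₁ hij
  · show π₂ (π₁ j₀) = j
    rw [← hj₁]
    exact Equiv.swap_apply_left _ _
/-- Determinant of a skew-symmetric matrix over a field of char ≠ 2 is a square. -/
lemma pf_skew_det_isSquare {F : Type*} [Field F] (h2 : (2 : F) ≠ 0) :
    ∀ (n : ℕ) (M : Matrix (Fin n) (Fin n) F), Mᵀ = -M → IsSquare M.det := by
  intro n
  induction n using Nat.strong_induction_on with
  | _ n ih =>
  intro M hM
  have hMskew : ∀ x y, M y x = -M x y := fun x y => by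
    have := congrFun (congrFun hM x) y
    simpa [Matrix.transpose_apply] using this
  have hdiag : ∀ x, M x x = 0 := fun x => by
    have := hMskew x x
    have h : (2 : F) * M x x = 0 := by linear_combination this
    exact (mul_eq_zero.mp h).resolve_left h2
  rcases Nat.eq_zero_or_pos n with h0 | hpos
  · subst h0
    simp [Matrix.det_fin_zero]
  by_cases hMz : M = 0
  · have : Nonempty (Fin n) := ⟨⟨0, hpos⟩⟩
    rw [hMz]
    exact ⟨0, by simp⟩
  obtain ⟨i, j, ha⟩ : ∃ i j, M i j ≠ 0 := by
    by_contra h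
    push_neg at h
    exact hMz (by ext x y; simpa using h x y)
  have hij : i ≠ j := by rintro rfl; exact ha (hdiag i)
  obtain ⟨e, he0, he1⟩ := pf_exists_equiv i j hij
  set M' := M.submatrix e e with hM'
  have hdet : M'.det = M.det := Matrix.det_submatrix_equiv_self e M
  have hM'skew : ∀ x y, M' y x = -M' x y := fun x y => hMskew (e x) (e y)
  set A := M'.toBlocks₁₁ with hA
  set B := M'.toBlocks₁₂ with hB
  set C := M'.toBlocks₂₁ with hC
  set D := M'.toBlocks₂₂ with hD
  have hfb : fromBlocks A B C D = M' := Matrix.fromBlocks_toBlocks M'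
  have ha' : A 0 1 = M i j := by
    show M' (Sum.inl 0) (Sum.inl 1) = M i j
    rw [hM']; simp [Matrix.submatrix_apply, he0, he1]
  have hAdet : A.det = M i j * M i j := by
    have hA01 : A 0 1 = M i j := ha'
    have hA10 : A 1 0 = -(M i j) := by
      rw [← ha']; exact hM'skew (Sum.inl 0) (Sum.inl 1)
    have hA00 : A 0 0 = 0 := by
      have := hM'skew (Sum.inl 0) (Sum.inl 0)
      have h : (2:F) * M' (Sum.inl 0) (Sum.inl 0) = 0 := by linear_combination this
      exact (mul_eq_zero.mp h).resolve_left h2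
    have hA11 : A 1 1 = 0 := by
      have := hM'skew (Sum.inl 1) (Sum.inl 1)
      have h : (2:F) * M' (Sum.inl 1) (Sum.inl 1) = 0 := by linear_combination this
      exact (mul_eq_zero.mp h).resolve_left h2
    rw [Matrix.det_fin_two, hA00, hA11, hA01, hA10]; ring
  haveI : Invertible A := A.invertibleOfIsUnitDet (by rw [hAdet]; exact (mul_ne_zero ha ha).isUnit)
  have hAt : Aᵀ = -A := by
    ext x y
    simp only [Matrix.transpose_apply, Matrix.neg_apply]
    exact hM'skew (Sum.inl x) (Sum.inl y)
  have hBt : Bᵀ = -C := by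
    ext x y
    simp only [Matrix.transpose_apply, Matrix.neg_apply]
    exact hM'skew (Sum.inr x) (Sum.inl y)
  have hCt : Cᵀ = -B := by
    ext x y
    simp only [Matrix.transpose_apply, Matrix.neg_apply]
    exact hM'skew (Sum.inl x) (Sum.inr y)
  have hDt : Dᵀ = -D := by
    ext x y
    simp only [Matrix.transpose_apply, Matrix.neg_apply]
    exact hM'skew (Sum.inr x) (Sum.inr y)
  have hinvAt : (⅟A)ᵀ = -⅟A := by
    have h1 : (⅟A)ᵀ * A = -1 := by
      have h0 := congrArg Matrix.transpose (mul_invOf_self A)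
      rw [Matrix.transpose_mul, hAt, Matrix.transpose_one] at h0
      calc (⅟A)ᵀ * A = -((⅟A)ᵀ * -A) := by noncomm_ring
        _ = -1 := by rw [h0]
    have h3 : (⅟A)ᵀ = ((⅟A)ᵀ * A) * ⅟A := by
      rw [Matrix.mul_assoc, mul_invOf_self, Matrix.mul_one]
    rw [h3, h1]
    exact neg_one_mul _
  set S := D - C * ⅟A * B with hS
  have hSt : Sᵀ = -S := by
    have hX : (C * ⅟A * B)ᵀ = -(C * ⅟A * B) := by
      rw [Matrix.transpose_mul, Matrix.transpose_mul, hBt, hinvAt, hCt]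
      simp only [Matrix.neg_mul, Matrix.mul_neg, neg_neg]
      rw [Matrix.mul_assoc]
    rw [hS, Matrix.transpose_sub, hDt, hX]
    abel
  obtain ⟨s, hs⟩ := ih (n - 2) (by omega) S hSt
  refine ⟨M i j * s, ?_⟩
  rw [← hdet, ← hfb, Matrix.det_fromBlocks₁₁, hAdet, ← hS, hs]
  ring
noncomputable section PfSetup

open MvPolynomial

/-- The generic skew-symmetric matrix. -/
noncomputable def pfY (n : ℕ) : Matrix (Fin n) (Fin n) (MvPolynomial (Fin n × Fin n) ℝ) :=
  Matrix.of fun i j => MvPolynomial.C (2⁻¹ : ℝ) * (MvPolynomial.X (i, j) - MvPolynomial.X (j, i))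

lemma pfY_skew (n : ℕ) : (pfY n)ᵀ = -(pfY n) := by
  ext i j
  simp only [Matrix.transpose_apply, Matrix.neg_apply, pfY, Matrix.of_apply]
  ring

lemma pfY_homog (n : ℕ) (i j : Fin n) : ((pfY n) i j).IsHomogeneous 1 := by
  have : ((pfY n) i j) = MvPolynomial.C (2⁻¹ : ℝ) * (MvPolynomial.X (i, j) - MvPolynomial.X (j, i)) := rfl
  rw [this]
  simpa using (MvPolynomial.isHomogeneous_C _ (2⁻¹ : ℝ)).mul
    ((MvPolynomial.isHomogeneous_X _ (i, j)).sub (MvPolynomial.isHomogeneous_X _ (j, i)))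

lemma pfY_map_eval {n : ℕ} (A : Matrix (Fin n) (Fin n) ℝ) (hA : Aᵀ = -A) :
    (pfY n).map (MvPolynomial.eval (fun p => A p.1 p.2)) = A := by
  have hskew : ∀ x y, A y x = -A x y := fun x y => by
    simpa using congrFun (congrFun hA x) y
  ext i j
  simp only [Matrix.map_apply, pfY, Matrix.of_apply, _root_.map_mul, _root_.map_sub,
    MvPolynomial.eval_C, MvPolynomial.eval_X]
  rw [hskew j i]
  ring

/-- The standard invertible skew matrix on `Fin k ⊕ Fin k`. -/
def pfJ (k : ℕ) : Matrix (Fin k ⊕ Fin k) (Fin k ⊕ Fin k) ℝ :=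
  Matrix.fromBlocks 0 1 (-1) 0

lemma pfJ_skew (k : ℕ) : (pfJ k)ᵀ = -(pfJ k) := by
  simp only [pfJ, Matrix.fromBlocks_transpose, Matrix.transpose_zero, Matrix.transpose_one,
    Matrix.transpose_neg, Matrix.fromBlocks_neg, neg_zero, neg_neg]

lemma pfJ_mul (k : ℕ) : pfJ k * Matrix.fromBlocks 0 (-1) 1 0 = 1 := by
  simp [pfJ, Matrix.fromBlocks_multiply, ← Matrix.fromBlocks_one]

lemma pfJ_det_ne (k : ℕ) : (pfJ k).det ≠ 0 := by
  have : Invertible (pfJ k) := invertibleOfRightInverse _ _ (pfJ_mul k)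
  exact (Matrix.isUnit_det_of_invertible _).ne_zero

/-- A skew invertible real matrix on `Fin (2*k)`, more generally any Fin n with an equiv. -/
lemma pf_exists_skew_invertible (n : ℕ) (hn : Even n) :
    ∃ W : Matrix (Fin n) (Fin n) ℝ, Wᵀ = -W ∧ W.det ≠ 0 := by
  obtain ⟨k, hk⟩ := hn
  have g : (Fin k ⊕ Fin k) ≃ Fin n := finSumFinEquiv.trans (finCongr (by omega))
  refine ⟨(pfJ k).submatrix g.symm g.symm, ?_, ?_⟩
  · ext x y
    simp only [Matrix.transpose_apply, Matrix.submatrix_apply, Matrix.neg_apply]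
    have := congrFun (congrFun (pfJ_skew k) (g.symm x)) (g.symm y)
    simpa using this
  · rw [Matrix.det_submatrix_equiv_self]
    exact pfJ_det_ne k

end PfSetup
section PfHomog

open MvPolynomial Finset

variable {σ : Type*}

lemma pf_zsmul_homog {p : MvPolynomial σ ℝ} {k : ℕ} (u : ℤˣ) (h : p.IsHomogeneous k) :
    (u • p).IsHomogeneous k := by
  rcases Int.units_eq_one_or u with rfl | rfl
  · simpa using h
  · have : ((-1 : ℤˣ) • p) = -p := by simp [Units.smul_def]
    rw [this]
    exact h.neg

lemma pf_det_isHomogeneous {k : ℕ} (M : Matrix (Fin k) (Fin k) (MvPolynomial σ ℝ))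
    (h : ∀ i j, (M i j).IsHomogeneous 1) : M.det.IsHomogeneous k := by
  rw [Matrix.det_apply]
  apply MvPolynomial.IsHomogeneous.sum
  intro τ _
  apply pf_zsmul_homog
  have := MvPolynomial.IsHomogeneous.prod Finset.univ (fun i => M (τ i) i) (fun _ => 1)
    (fun i _ => h (τ i) i)
  simpa using this

lemma pf_adj_isHomogeneous {k : ℕ} (M : Matrix (Fin k) (Fin k) (MvPolynomial σ ℝ))
    (h : ∀ i j, (M i j).IsHomogeneous 1) (i j : Fin k) :
    ((Matrix.adjugate M) i j).IsHomogeneous (k - 1) := by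
  rw [Matrix.adjugate_apply, ← Matrix.det_transpose, Matrix.det_apply]
  apply MvPolynomial.IsHomogeneous.sum
  intro τ _
  apply pf_zsmul_homog
  have hprod : (∏ x : Fin k, (M.updateRow j (Pi.single i 1))ᵀ (τ x) x)
      = (Pi.single (M := fun _ => MvPolynomial σ ℝ) i 1 (τ j)) *
        ∏ x ∈ Finset.univ.erase j, M x (τ x) := by
    rw [← Finset.mul_prod_erase Finset.univ _ (Finset.mem_univ j)]
    congr 1
    · rw [Matrix.transpose_apply, Matrix.updateRow_self]
    · apply Finset.prod_congr rfl
      intro x hx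
      rw [Matrix.transpose_apply, Matrix.updateRow_ne (Finset.ne_of_mem_erase hx)]
  rw [hprod]
  by_cases hτ : τ j = i
  · rw [hτ, Pi.single_eq_same, one_mul]
    have := MvPolynomial.IsHomogeneous.prod (Finset.univ.erase j) (fun x => M x (τ x))
      (fun _ => 1) (fun x _ => h x (τ x))
    simpa [Finset.card_erase_of_mem] using this
  · rw [Pi.single_eq_of_ne hτ, zero_mul]
    exact MvPolynomial.isHomogeneous_zero _ _ _

lemma pf_comp_ne_zero_mem {p : MvPolynomial σ ℝ} {d : ℕ}
    (h : homogeneousComponent d p ≠ 0) : d ∈ Finset.range (p.totalDegree + 1) := by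
  rw [Finset.mem_range]
  by_contra hd
  exact h (homogeneousComponent_eq_zero _ p (by omega))

/-- components of a product at extremal degrees -/
lemma pf_comp_mul_min {p q : MvPolynomial σ ℝ} {d e : ℕ}
    (hp : ∀ d' < d, homogeneousComponent d' p = 0)
    (hq : ∀ e' < e, homogeneousComponent e' q = 0) :
    homogeneousComponent (d + e) (p * q)
      = homogeneousComponent d p * homogeneousComponent e q := by
  classical
  have hP := (sum_homogeneousComponent p).symm
  have hQ := (sum_homogeneousComponent q).symm
  calc homogeneousComponent (d + e) (p * q)
      = ∑ d' ∈ range (p.totalDegree + 1), ∑ e' ∈ range (q.totalDegree + 1),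
          homogeneousComponent (d + e) (homogeneousComponent d' p * homogeneousComponent e' q) := by
        conv_lhs => rw [hP, hQ, Finset.sum_mul_sum]
        rw [map_sum]
        exact Finset.sum_congr rfl (fun _ _ => map_sum _ _ _)
    _ = ∑ d' ∈ range (p.totalDegree + 1), ∑ e' ∈ range (q.totalDegree + 1),
          (if d + e = d' + e' then homogeneousComponent d' p * homogeneousComponent e' q else 0) := by
        refine Finset.sum_congr rfl fun d' _ => Finset.sum_congr rfl fun e' _ => ?_
        exact homogeneousComponent_of_mem
          (MvPolynomial.homogeneousSubmodule_mul d' e'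
            (Submodule.mul_mem_mul (homogeneousComponent_mem d' p) (homogeneousComponent_mem e' q)))
    _ = homogeneousComponent d p * homogeneousComponent e q := by
        rw [Finset.sum_eq_single d]
        · rw [Finset.sum_eq_single e]
          · simp
          · intro e' _ he'
            rcases lt_or_gt_of_ne he' with hlt | hgt
            · rw [hq e' hlt]; simp
            · rw [if_neg (by omega)]
          · intro he
            have : homogeneousComponent e q = 0 := by
              by_contra hne
              exact he (pf_comp_ne_zero_mem hne)
            simp [this]
        · intro d' _ hd'
          apply Finset.sum_eq_zero
          intro e' _
          rcases lt_or_gt_of_ne hd' with hlt | hgt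
          · rw [hp d' hlt, zero_mul]; simp
          · by_cases hcond : d + e = d' + e'
            · rw [hq e' (by omega), mul_zero]; simp
            · rw [if_neg hcond]
        · intro hd
          have : homogeneousComponent d p = 0 := by
            by_contra hne
            exact hd (pf_comp_ne_zero_mem hne)
          apply Finset.sum_eq_zero
          intro e' _
          simp [this]

lemma pf_comp_mul_max {p q : MvPolynomial σ ℝ} {d e : ℕ}
    (hp : ∀ d' > d, homogeneousComponent d' p = 0)
    (hq : ∀ e' > e, homogeneousComponent e' q = 0) :
    homogeneousComponent (d + e) (p * q)
      = homogeneousComponent d p * homogeneousComponent e q := by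
  classical
  have hP := (sum_homogeneousComponent p).symm
  have hQ := (sum_homogeneousComponent q).symm
  calc homogeneousComponent (d + e) (p * q)
      = ∑ d' ∈ range (p.totalDegree + 1), ∑ e' ∈ range (q.totalDegree + 1),
          homogeneousComponent (d + e) (homogeneousComponent d' p * homogeneousComponent e' q) := by
        conv_lhs => rw [hP, hQ, Finset.sum_mul_sum]
        rw [map_sum]
        exact Finset.sum_congr rfl (fun _ _ => map_sum _ _ _)
    _ = ∑ d' ∈ range (p.totalDegree + 1), ∑ e' ∈ range (q.totalDegree + 1),
          (if d + e = d' + e' then homogeneousComponent d' p * homogeneousComponent e' q else 0) := by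
        refine Finset.sum_congr rfl fun d' _ => Finset.sum_congr rfl fun e' _ => ?_
        exact homogeneousComponent_of_mem
          (MvPolynomial.homogeneousSubmodule_mul d' e'
            (Submodule.mul_mem_mul (homogeneousComponent_mem d' p) (homogeneousComponent_mem e' q)))
    _ = homogeneousComponent d p * homogeneousComponent e q := by
        rw [Finset.sum_eq_single d]
        · rw [Finset.sum_eq_single e]
          · simp
          · intro e' _ he'
            rcases lt_or_gt_of_ne he' with hlt | hgt
            · rw [if_neg (by omega)]
            · rw [hq e' hgt, mul_zero]; simp
          · intro he
            have : homogeneousComponent e q = 0 := by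
              by_contra hne
              exact he (pf_comp_ne_zero_mem hne)
            simp [this]
        · intro d' _ hd'
          apply Finset.sum_eq_zero
          intro e' _
          rcases lt_or_gt_of_ne hd' with hlt | hgt
          · by_cases hcond : d + e = d' + e'
            · rw [hq e' (by omega), mul_zero]; simp
            · rw [if_neg hcond]
          · rw [hp d' hgt, zero_mul]; simp
        · intro hd
          have : homogeneousComponent d p = 0 := by
            by_contra hne
            exact hd (pf_comp_ne_zero_mem hne)
          apply Finset.sum_eq_zero
          intro e' _
          simp [this]

end PfHomog
section PfFactor

open MvPolynomial Finset

variable {σ : Type*}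

lemma pf_isHomogeneous_of_mul {p q : MvPolynomial σ ℝ} {n : ℕ} (hp : p ≠ 0) (hq : q ≠ 0)
    (h : (p * q).IsHomogeneous n) :
    ∃ a b : ℕ, a + b = n ∧ p.IsHomogeneous a ∧ q.IsHomogeneous b := by
  classical
  set Sp := (Finset.range (p.totalDegree + 1)).filter
    (fun d => homogeneousComponent d p ≠ 0) with hSp
  set Sq := (Finset.range (q.totalDegree + 1)).filter
    (fun d => homogeneousComponent d q ≠ 0) with hSq
  have hSpne : Sp.Nonempty := by
    by_contra hne
    rw [Finset.not_nonempty_iff_eq_empty] at hne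
    apply hp
    conv_lhs => rw [← sum_homogeneousComponent p]
    apply Finset.sum_eq_zero
    intro d hd
    by_contra hz
    have : d ∈ Sp := Finset.mem_filter.mpr ⟨hd, hz⟩
    simp [hne] at this
  have hSqne : Sq.Nonempty := by
    by_contra hne
    rw [Finset.not_nonempty_iff_eq_empty] at hne
    apply hq
    conv_lhs => rw [← sum_homogeneousComponent q]
    apply Finset.sum_eq_zero
    intro d hd
    by_contra hz
    have : d ∈ Sq := Finset.mem_filter.mpr ⟨hd, hz⟩
    simp [hne] at this
  set d := Sp.min' hSpne with hdd
  set D := Sp.max' hSpne with hDD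
  set e := Sq.min' hSqne with hee
  set E := Sq.max' hSqne with hEE
  have hmemd : homogeneousComponent d p ≠ 0 := (Finset.mem_filter.mp (Sp.min'_mem hSpne)).2
  have hmemD : homogeneousComponent D p ≠ 0 := (Finset.mem_filter.mp (Sp.max'_mem hSpne)).2
  have hmeme : homogeneousComponent e q ≠ 0 := (Finset.mem_filter.mp (Sq.min'_mem hSqne)).2
  have hmemE : homogeneousComponent E q ≠ 0 := (Finset.mem_filter.mp (Sq.max'_mem hSqne)).2
  have hbelowp : ∀ d' < d, homogeneousComponent d' p = 0 := by
    intro d' hd'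
    by_contra hz
    have hd'mem : d' ∈ Sp := Finset.mem_filter.mpr ⟨pf_comp_ne_zero_mem hz, hz⟩
    exact absurd (Sp.min'_le d' hd'mem) (by omega)
  have habovep : ∀ d' > D, homogeneousComponent d' p = 0 := by
    intro d' hd'
    by_contra hz
    have hd'mem : d' ∈ Sp := Finset.mem_filter.mpr ⟨pf_comp_ne_zero_mem hz, hz⟩
    exact absurd (Sp.le_max' d' hd'mem) (by omega)
  have hbelowq : ∀ e' < e, homogeneousComponent e' q = 0 := by
    intro e' he'
    by_contra hz
    have he'mem : e' ∈ Sq := Finset.mem_filter.mpr ⟨pf_comp_ne_zero_mem hz, hz⟩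
    exact absurd (Sq.min'_le e' he'mem) (by omega)
  have haboveq : ∀ e' > E, homogeneousComponent e' q = 0 := by
    intro e' he'
    by_contra hz
    have he'mem : e' ∈ Sq := Finset.mem_filter.mpr ⟨pf_comp_ne_zero_mem hz, hz⟩
    exact absurd (Sq.le_max' e' he'mem) (by omega)
  have hpq : ∀ k, homogeneousComponent k (p * q) = if k = n then p * q else 0 :=
    fun k => homogeneousComponent_of_mem ((mem_homogeneousSubmodule _ _).mpr h)
  have hminval : homogeneousComponent (d + e) (p * q)
      = homogeneousComponent d p * homogeneousComponent e q := pf_comp_mul_min hbelowp hbelowq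
  have hmaxval : homogeneousComponent (D + E) (p * q)
      = homogeneousComponent D p * homogeneousComponent E q := pf_comp_mul_max habovep haboveq
  have hde : d + e = n := by
    by_contra hne
    rw [hpq (d + e), if_neg hne] at hminval
    exact mul_ne_zero hmemd hmeme hminval.symm
  have hDE : D + E = n := by
    by_contra hne
    rw [hpq (D + E), if_neg hne] at hmaxval
    exact mul_ne_zero hmemD hmemE hmaxval.symm
  have hdD : d ≤ D := Sp.min'_le _ (Sp.max'_mem hSpne)
  have heE : e ≤ E := Sq.min'_le _ (Sq.max'_mem hSqne)
  have hdeq : d = D := by omega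
  have heeq : e = E := by omega
  refine ⟨d, e, hde, ?_, ?_⟩
  · have : p = homogeneousComponent d p := by
      conv_lhs => rw [← sum_homogeneousComponent p]
      rw [Finset.sum_eq_single d]
      · intro d' hd' hne
        rcases lt_or_gt_of_ne hne with hlt | hgt
        · exact hbelowp d' hlt
        · exact habovep d' (by omega)
      · intro hd
        exact absurd ((Finset.mem_filter.mp (Sp.min'_mem hSpne)).1) hd
    rw [this]
    exact homogeneousComponent_isHomogeneous d p
  · have : q = homogeneousComponent e q := by
      conv_lhs => rw [← sum_homogeneousComponent q]
      rw [Finset.sum_eq_single e]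
      · intro e' he' hne
        rcases lt_or_gt_of_ne hne with hlt | hgt
        · exact hbelowq e' hlt
        · exact haboveq e' (by omega)
      · intro he
        exact absurd ((Finset.mem_filter.mp (Sq.min'_mem hSqne)).1) he
    rw [this]
    exact homogeneousComponent_isHomogeneous e q

end PfFactor
noncomputable section PfCore

open MvPolynomial

abbrev pfR (n : ℕ) := MvPolynomial (Fin n × Fin n) ℝ
abbrev pfK (n : ℕ) := FractionRing (pfR n)

lemma pf_sqrt {n : ℕ} (c : pfR n) (x : pfK n)
    (hx : x * x = algebraMap (pfR n) (pfK n) c) :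
    ∃ p : pfR n, algebraMap (pfR n) (pfK n) p = x := by
  apply IsIntegrallyClosed.isIntegral_iff.mp
  refine ⟨Polynomial.X ^ 2 - Polynomial.C c, Polynomial.monic_X_pow_sub_C c (by norm_num), ?_⟩
  simp [sq, hx]

lemma pf_two_ne_zeroR (n : ℕ) : (2 : pfR n) ≠ 0 := by
  intro h
  have h2 := congrArg (MvPolynomial.eval (fun _ => (0:ℝ))) h
  rw [map_ofNat, map_zero] at h2
  norm_num at h2

lemma pf_two_ne_zero (n : ℕ) : (2 : pfK n) ≠ 0 := by
  have : algebraMap (pfR n) (pfK n) 2 = 2 := map_ofNat _ 2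
  rw [← this]
  exact fun h => pf_two_ne_zeroR n
    (IsFractionRing.injective (pfR n) (pfK n) (by simpa using h))

lemma pf_detY_ne_zero {n : ℕ} (hn : Even n) : (pfY n).det ≠ 0 := by
  obtain ⟨W, hWskew, hWdet⟩ := pf_exists_skew_invertible n hn
  intro h
  apply hWdet
  have := congrArg (MvPolynomial.eval fun p => W p.1 p.2) h
  rwa [RingHom.map_det, RingHom.mapMatrix_apply, pfY_map_eval W hWskew, map_zero] at this

set_option maxHeartbeats 1000000 in
/-- Key generic divisibility: det Y divides the square of any off-diagonal adjugate entry. -/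
lemma pf_adj_sq {n : ℕ} (hn : Even n) (i j : Fin n) (hij : i ≠ j) :
    ∃ c : pfR n, (Matrix.adjugate (pfY n) i j) ^ 2 = (pfY n).det * c := by
  classical
  obtain ⟨e, he0, he1⟩ := pf_exists_equiv i j hij
  have h2n : 2 ≤ n := by
    by_contra h
    push_neg at h
    interval_cases n
    · exact i.elim0
    · exact hij (Subsingleton.elim i j)
  -- real witness matrix
  obtain ⟨Wk, hWkskew, hWkdet⟩ := pf_exists_skew_invertible (n - 2) (by
    obtain ⟨t, ht⟩ := hn
    exact ⟨t - 1, by omega⟩)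
  set J2 : Matrix (Fin 2) (Fin 2) ℝ := !![0, 1; -1, 0] with hJ2
  set W' : Matrix (Fin 2 ⊕ Fin (n-2)) (Fin 2 ⊕ Fin (n-2)) ℝ :=
    Matrix.fromBlocks J2 0 0 Wk with hW'
  have hW'skew : W'ᵀ = -W' := by
    have hJ2t : J2ᵀ = -J2 := by
      rw [hJ2]; ext x y; fin_cases x <;> fin_cases y <;> simp
    rw [hW', Matrix.fromBlocks_transpose, Matrix.fromBlocks_neg, hJ2t, hWkskew]
    simp
  set W : Matrix (Fin n) (Fin n) ℝ := W'.submatrix e.symm e.symm with hWdef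
  have hWsub : ∀ x y, W (e x) (e y) = W' x y := by
    intro x y; rw [hWdef]; simp
  have hWskew : Wᵀ = -W := by
    ext x y
    have := congrFun (congrFun hW'skew (e.symm x)) (e.symm y)
    simp only [Matrix.transpose_apply, Matrix.neg_apply] at this ⊢
    simpa [hWdef] using this
  set ψ := MvPolynomial.eval (fun p : Fin n × Fin n => W p.1 p.2) with hψ
  have hYψ : (pfY n).map ψ = W := pfY_map_eval W hWskew
  -- the minor
  set Dy : Matrix (Fin (n-2)) (Fin (n-2)) (pfR n) :=
    Matrix.of (fun k l => pfY n (e (Sum.inr k)) (e (Sum.inr l))) with hDy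
  have hDyψ : Dy.map ψ = Wk := by
    ext k l
    simp only [Matrix.map_apply, hDy, Matrix.of_apply]
    have h1 : ψ (pfY n (e (Sum.inr k)) (e (Sum.inr l))) = W (e (Sum.inr k)) (e (Sum.inr l)) := by
      rw [← hYψ]; rfl
    rw [h1, hWsub]
    rw [hW']; rfl
  have hDydet : Dy.det ≠ 0 := by
    intro h
    apply hWkdet
    have := congrArg ψ h
    rwa [RingHom.map_det, RingHom.mapMatrix_apply, hDyψ, map_zero] at this
  have hdetY : (pfY n).det ≠ 0 := pf_detY_ne_zero hn
  -- pass to the fraction field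
  set φ := algebraMap (pfR n) (pfK n) with hφ
  have hφinj : Function.Injective φ := IsFractionRing.injective (pfR n) (pfK n)
  set M : Matrix (Fin n) (Fin n) (pfK n) := (pfY n).map φ with hM
  have hMdet : M.det = φ (pfY n).det := by
    rw [RingHom.map_det, RingHom.mapMatrix_apply]
  have hMdetne : M.det ≠ 0 := by
    rw [hMdet]
    exact fun h => hdetY (hφinj (by simpa using h))
  have hMskew : ∀ x y, M y x = -M x y := by
    intro x y
    have := congrFun (congrFun (pfY_skew n) x) y
    simp only [Matrix.transpose_apply, Matrix.neg_apply] at this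
    simp only [hM, Matrix.map_apply, this, map_neg]
  set M' := M.submatrix e e with hM'
  have hM'det : M'.det = M.det := Matrix.det_submatrix_equiv_self e M
  have hM'skew : ∀ x y, M' y x = -M' x y := fun x y => hMskew (e x) (e y)
  set A := M'.toBlocks₁₁ with hA
  set B := M'.toBlocks₁₂ with hB
  set C := M'.toBlocks₂₁ with hC
  set D := M'.toBlocks₂₂ with hD
  have hfb : Matrix.fromBlocks A B C D = M' := Matrix.fromBlocks_toBlocks M'
  have hDmap : D = Dy.map φ := by
    ext k l; rfl
  have hDdet : D.det ≠ 0 := by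
    rw [hDmap, ← RingHom.mapMatrix_apply, ← RingHom.map_det]
    exact fun h => hDydet (hφinj (by simpa using h))
  haveI hDinv : Invertible D := D.invertibleOfIsUnitDet (isUnit_iff_ne_zero.mpr hDdet)
  have hDt : Dᵀ = -D := by
    ext x y
    simp only [Matrix.transpose_apply, Matrix.neg_apply]
    exact hM'skew (Sum.inr x) (Sum.inr y)
  have hBt : Bᵀ = -C := by
    ext x y
    simp only [Matrix.transpose_apply, Matrix.neg_apply]
    exact hM'skew (Sum.inr x) (Sum.inl y)
  have hCt : Cᵀ = -B := by
    ext x y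
    simp only [Matrix.transpose_apply, Matrix.neg_apply]
    exact hM'skew (Sum.inl x) (Sum.inr y)
  have hinvDt : (⅟D)ᵀ = -⅟D := by
    have h1 : (⅟D)ᵀ * D = -1 := by
      have h0 := congrArg Matrix.transpose (mul_invOf_self D)
      rw [Matrix.transpose_mul, hDt, Matrix.transpose_one] at h0
      calc (⅟D)ᵀ * D = -((⅟D)ᵀ * -D) := by noncomm_ring
        _ = -1 := by rw [h0]
    have h3 : (⅟D)ᵀ = ((⅟D)ᵀ * D) * ⅟D := by
      rw [Matrix.mul_assoc, mul_invOf_self, Matrix.mul_one]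
    rw [h3, h1]
    exact neg_one_mul _
  set S := A - B * ⅟D * C with hS
  have hSt : Sᵀ = -S := by
    have hAt : Aᵀ = -A := by
      ext x y
      simp only [Matrix.transpose_apply, Matrix.neg_apply]
      exact hM'skew (Sum.inl x) (Sum.inl y)
    have hX : (B * ⅟D * C)ᵀ = -(B * ⅟D * C) := by
      rw [Matrix.transpose_mul, Matrix.transpose_mul, hCt, hinvDt, hBt]
      simp only [Matrix.neg_mul, Matrix.mul_neg, neg_neg]
      rw [Matrix.mul_assoc]
    rw [hS, Matrix.transpose_sub, hAt, hX]
    abel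
  have hdetblocks : M'.det = D.det * S.det := by
    rw [← hfb, Matrix.det_fromBlocks₂₂, ← hS]
  have hSdetne : S.det ≠ 0 := by
    intro h
    rw [hdetblocks, h, mul_zero] at hM'det
    exact hMdetne hM'det.symm
  set s := S 0 1 with hs
  have hSdiag : ∀ x, S x x = 0 := by
    intro x
    have h1 := congrFun (congrFun hSt x) x
    simp only [Matrix.transpose_apply, Matrix.neg_apply] at h1
    have h : (2 : pfK n) * S x x = 0 := by linear_combination h1
    exact (mul_eq_zero.mp h).resolve_left (pf_two_ne_zero n)
  have hS10 : S 1 0 = -s := by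
    have h1 := congrFun (congrFun hSt 0) 1
    simpa only [Matrix.transpose_apply, Matrix.neg_apply] using h1
  have hSdet : S.det = s * s := by
    rw [Matrix.det_fin_two, hSdiag 0, hSdiag 1, hS10]; ring
  have hsne : s ≠ 0 := fun h => hSdetne (by rw [hSdet, h, mul_zero])
  haveI hSinvert : Invertible S :=
    S.invertibleOfIsUnitDet (isUnit_iff_ne_zero.mpr hSdetne)
  haveI hSinvert' : Invertible (A - B * ⅟D * C) := by rw [← hS]; exact hSinvert
  haveI hMinvert : Invertible M := M.invertibleOfIsUnitDet (isUnit_iff_ne_zero.mpr hMdetne)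
  haveI hM'invert : Invertible M' :=
    M'.invertibleOfIsUnitDet (isUnit_iff_ne_zero.mpr (by rw [hM'det]; exact hMdetne))
  haveI hfbinvert : Invertible (Matrix.fromBlocks A B C D) := by rw [hfb]; exact hM'invert
  have hblockinv := Matrix.invOf_fromBlocks₂₂_eq A B C D
  have hMN : M' * ((M⁻¹).submatrix e e) = 1 := by
    rw [hM', Matrix.submatrix_mul_equiv,
      Matrix.mul_nonsing_inv M (isUnit_iff_ne_zero.mpr hMdetne), Matrix.submatrix_one_equiv]
  have hNinv : (M⁻¹).submatrix e e = ⅟(Matrix.fromBlocks A B C D) := by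
    have h1 : M'⁻¹ = (M⁻¹).submatrix e e := Matrix.inv_eq_right_inv hMN
    rw [← h1, Matrix.invOf_eq_nonsing_inv, hfb]
  have hentry : M⁻¹ i j = (⅟S) 0 1 := by
    have h0 : (M⁻¹).submatrix e e (Sum.inl 0) (Sum.inl 1) = M⁻¹ i j := by
      simp [Matrix.submatrix_apply, he0, he1]
    rw [← h0, hNinv, hblockinv, Matrix.fromBlocks_apply₁₁]
  have hSinv01 : (⅟S) 0 1 = -(s⁻¹) := by
    have hSval : S = !![0, s; -s, 0] := by
      ext x y
      fin_cases x <;> fin_cases y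
      · simpa using hSdiag 0
      · rfl
      · simpa using hS10
      · simpa using hSdiag 1
    rw [Matrix.invOf_eq_nonsing_inv, Matrix.inv_def]
    simp only [Matrix.smul_apply]
    have hadj : S.adjugate 0 1 = -s := by
      rw [hSval, Matrix.adjugate_fin_two]
      simp
    rw [hadj, hSdet, Ring.inverse_eq_inv']
    rw [smul_eq_mul]
    field_simp
  have hadjM : Matrix.adjugate M i j = M.det * (M⁻¹ i j) := by
    have h1 : M⁻¹ i j = Ring.inverse M.det * Matrix.adjugate M i j := by
      rw [Matrix.inv_def]
      simp [Matrix.smul_apply]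
    rw [h1, Ring.inverse_eq_inv']
    field_simp
  have hφadj : φ (Matrix.adjugate (pfY n) i j) = Matrix.adjugate M i j := by
    have h1 := RingHom.map_adjugate φ (pfY n)
    have h2 := congrFun (congrFun (congrArg (fun (X : Matrix (Fin n) (Fin n) (pfK n)) => (X : Matrix (Fin n) (Fin n) (pfK n))) h1) i) j
    simpa [RingHom.mapMatrix_apply, Matrix.map_apply, hM] using h2
  refine ⟨Dy.det, hφinj ?_⟩
  rw [map_pow, _root_.map_mul, hφadj, hadjM, hentry, hSinv01, ← hMdet]
  have hDYdet : φ Dy.det = D.det := by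
    rw [RingHom.map_det, RingHom.mapMatrix_apply, ← hDmap]
  rw [hDYdet, ← hM'det, hdetblocks, hSdet]
  field_simp

set_option maxHeartbeats 1000000 in
/-- The generic Pfaffian and adjoint Pfaffian. -/
lemma pf_main (m : ℕ) (hm : 1 ≤ m) :
    ∃ (P : pfR (2*m)) (Q : Matrix (Fin (2*m)) (Fin (2*m)) (pfR (2*m))),
      P.IsHomogeneous m ∧ (∀ i j, (Q i j).IsHomogeneous (m-1)) ∧
      (pfY (2*m)).det = P * P ∧ Qᵀ = -Q ∧ Q * (pfY (2*m)) = P • 1 := by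
  classical
  set n := 2*m with hnm
  have hn : Even n := ⟨m, by omega⟩
  have hdetY : (pfY n).det ≠ 0 := pf_detY_ne_zero hn
  set φ := algebraMap (pfR n) (pfK n) with hφ
  have hφinj : Function.Injective φ := IsFractionRing.injective (pfR n) (pfK n)
  set M : Matrix (Fin n) (Fin n) (pfK n) := (pfY n).map φ with hM
  have hMdet : M.det = φ (pfY n).det := by
    rw [RingHom.map_det, RingHom.mapMatrix_apply]
  have hMskewT : Mᵀ = -M := by
    ext x y
    have := congrFun (congrFun (pfY_skew n) x) y
    simp only [Matrix.transpose_apply, Matrix.neg_apply] at this ⊢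
    simp only [hM, Matrix.map_apply, this, map_neg]
  obtain ⟨y, hy⟩ := pf_skew_det_isSquare (pf_two_ne_zero n) n M hMskewT
  obtain ⟨P, hP⟩ := pf_sqrt (pfY n).det y (by rw [← hy, ← hMdet])
  have hPP : (pfY n).det = P * P := by
    apply hφinj
    rw [_root_.map_mul, hP, ← hy, ← hMdet]
  have hPne : P ≠ 0 := fun h => hdetY (by rw [hPP, h, mul_zero])
  have hdethom : (pfY n).det.IsHomogeneous n :=
    pf_det_isHomogeneous (pfY n) (pfY_homog n)
  have hPhom : P.IsHomogeneous m := by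
    obtain ⟨a, b, hab, ha, hb⟩ := pf_isHomogeneous_of_mul hPne hPne (hPP ▸ hdethom)
    have hae : a = b := ha.inj_right hb hPne
    have : a = m := by omega
    exact this ▸ ha
  -- adjugate is skew
  have hadjskew : (Matrix.adjugate (pfY n))ᵀ = -(Matrix.adjugate (pfY n)) := by
    have hYneg : (pfY n)ᵀ = (-1 : pfR n) • pfY n := by rw [pfY_skew]; simp
    have h1 := Matrix.adjugate_transpose (pfY n)
    rw [hYneg, Matrix.adjugate_smul] at h1
    rw [Fintype.card_fin] at h1
    have hodd : Odd (n - 1) := ⟨m - 1, by omega⟩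
    rw [h1, hodd.neg_one_pow]
    simp
  have hadjdiag : ∀ i, Matrix.adjugate (pfY n) i i = 0 := by
    intro i
    have h1 := congrFun (congrFun hadjskew i) i
    simp only [Matrix.transpose_apply, Matrix.neg_apply] at h1
    have h : (2 : pfR n) * Matrix.adjugate (pfY n) i i = 0 := by linear_combination h1
    exact (mul_eq_zero.mp h).resolve_left (pf_two_ne_zeroR n)
  have hφP : φ P ≠ 0 := fun h => hPne (hφinj (by simpa using h))
  have hQex : ∀ i j, ∃ q : pfR n, P * q = Matrix.adjugate (pfY n) i j := by
    intro i j
    by_cases hij : i = j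
    · exact ⟨0, by rw [mul_zero, hij, hadjdiag]⟩
    · obtain ⟨c, hc⟩ := pf_adj_sq hn i j hij
      set x : pfK n := φ (Matrix.adjugate (pfY n) i j) * (φ P)⁻¹ with hx
      have hxx : x * x = φ c := by
        have h1 : φ ((Matrix.adjugate (pfY n) i j)^2) = φ ((pfY n).det * c) := congrArg φ hc
        rw [map_pow, _root_.map_mul] at h1
        rw [hPP, _root_.map_mul] at h1
        rw [hx]
        field_simp
        rw [sq] at h1
        linear_combination h1
      obtain ⟨q, hq⟩ := pf_sqrt c x hxx
      refine ⟨q, hφinj ?_⟩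
      rw [_root_.map_mul, hq, hx]
      field_simp
  choose Qf hQf using hQex
  set Q : Matrix (Fin n) (Fin n) (pfR n) := Matrix.of Qf with hQ
  have hPQ : P • Q = Matrix.adjugate (pfY n) := by
    refine Matrix.ext fun i j => ?_
    simp only [Matrix.smul_apply, smul_eq_mul, hQ, Matrix.of_apply]
    exact hQf i j
  have hcancel : ∀ X Z : Matrix (Fin n) (Fin n) (pfR n), P • X = P • Z → X = Z := by
    intro X Z h
    refine Matrix.ext fun i j => ?_
    have := congrFun (congrFun h i) j
    simp only [Matrix.smul_apply, smul_eq_mul] at this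
    exact mul_left_cancel₀ hPne this
  refine ⟨P, Q, hPhom, ?_, hPP, ?_, ?_⟩
  · intro i j
    by_cases hq0 : Q i j = 0
    · rw [hq0]; exact MvPolynomial.isHomogeneous_zero _ _ _
    · have hadjhom : ((Matrix.adjugate (pfY n)) i j).IsHomogeneous (n - 1) :=
        pf_adj_isHomogeneous (pfY n) (pfY_homog n) i j
      have hprod : (P * Q i j).IsHomogeneous (n - 1) := by
        rw [show P * Q i j = Matrix.adjugate (pfY n) i j from hQf i j]
        exact hadjhom
      obtain ⟨a, b, hab, ha, hb⟩ := pf_isHomogeneous_of_mul hPne hq0 hprod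
      have ham : a = m := ha.inj_right hPhom hPne
      have : b = m - 1 := by omega
      exact this ▸ hb
  · apply hcancel
    rw [smul_neg, ← Matrix.transpose_smul, hPQ, hadjskew]
  · apply hcancel
    rw [smul_smul, ← hPP, ← smul_mul_assoc, hPQ, Matrix.adjugate_mul]

end PfCore

/-- Pfaffian and adjoint Pfaffian: for every `m ≥ 1` there are a polynomial `P`
(homogeneous of degree `m`) and polynomials `Q i j` (homogeneous of degree `m - 1`)
in the entries of a `2m × 2m` matrix such that, for every skew-symmetric `A`:
`det A = P(A)²`, the matrix `Q(A)` is skew-symmetric, and `Q(A) * A = P(A) • Id`. -/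
theorem exists_pfaffian_and_adjoint_pfaffian (m : ℕ) (hm : 1 ≤ m) :
    ∃ (P : MvPolynomial (Fin (2 * m) × Fin (2 * m)) ℝ)
      (Q : Fin (2 * m) → Fin (2 * m) → MvPolynomial (Fin (2 * m) × Fin (2 * m)) ℝ),
      P.IsHomogeneous m ∧
      (∀ i j, (Q i j).IsHomogeneous (m - 1)) ∧
      ∀ A : Matrix (Fin (2 * m)) (Fin (2 * m)) ℝ, Aᵀ = -A →
        A.det = (MvPolynomial.eval (fun p => A p.1 p.2) P) ^ 2 ∧
        (Matrix.of fun i j => MvPolynomial.eval (fun p => A p.1 p.2) (Q i j))ᵀ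
          = -(Matrix.of fun i j => MvPolynomial.eval (fun p => A p.1 p.2) (Q i j)) ∧
        (Matrix.of fun i j => MvPolynomial.eval (fun p => A p.1 p.2) (Q i j)) * A
          = MvPolynomial.eval (fun p => A p.1 p.2) P
              • (1 : Matrix (Fin (2 * m)) (Fin (2 * m)) ℝ) := by
  obtain ⟨P, Q, hPhom, hQhom, hPP, hQt, hQY⟩ := pf_main m hm
  refine ⟨P, fun i j => Q i j, hPhom, fun i j => hQhom i j, ?_⟩
  intro A hA
  set evA := MvPolynomial.eval (fun p : Fin (2*m) × Fin (2*m) => A p.1 p.2) with hevA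
  have hYA : (pfY (2*m)).map evA = A := pfY_map_eval A hA
  have hQmapT : (Matrix.of fun i j => evA (Q i j)) = Q.map evA := rfl
  refine ⟨?_, ?_, ?_⟩
  · rw [← hYA, ← RingHom.mapMatrix_apply, ← RingHom.map_det, hPP, _root_.map_mul, sq]
  · rw [hQmapT]
    refine Matrix.ext fun x y => ?_
    have h1 := congrFun (congrFun hQt x) y
    simp only [Matrix.transpose_apply, Matrix.neg_apply] at h1 ⊢
    simp only [Matrix.map_apply, h1, map_neg]
  · rw [hQmapT, ← hYA, ← Matrix.map_mul, hQY]
    refine Matrix.ext fun x y => ?_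
    simp only [Matrix.map_apply, Matrix.smul_apply, Matrix.one_apply, smul_eq_mul,
      mul_ite, mul_one, mul_zero, apply_ite evA, _root_.map_one, _root_.map_zero, _root_.map_mul]
end

section
/- Let A ∈ M_k(ℝ) be skew-symmetric of rank 2m₀, written in block form with blocks A₁ ∈ M_{2m₀}(ℝ) (top-left), A₂ ∈ M_{2m₀, k−2m₀}(ℝ) (top-right), −A₂ᵀ (bottom-left) and A₃ ∈ M_{k−2m₀}(ℝ) (bottom-right), where A₁ is invertible. Let p ∈ ℝ with p ≠ 0 and B ∈ M_{2m₀}(ℝ) satisfy B · A₁ = p · Id_{2m₀}. For i = 1, …, k − 2m₀ set v_i = (−B A₂ e_i, p e_i) ∈ ℝ^{2m₀} × ℝ^{k−2m₀}, where e_1, …, e_{k−2m₀} is the canonical basis of ℝ^{k−2m₀}. Then v_1, …, v_{k−2m₀} is a basis of the kernel of A. -/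
open Matrix

/-- For a skew-symmetric matrix of rank `2m₀` in block form
`A = [[A₁, A₂], [-A₂ᵀ, A₃]]` with `A₁ ∈ M_{2m₀}(ℝ)` invertible, and `B`, `p ≠ 0`
with `B A₁ = p • Id`, the vectors `v i = (-B A₂ eᵢ, p eᵢ)` form a basis of the
kernel of `A`. -/
theorem basis_of_kernel_skew_symmetric_block (m₀ r : ℕ)
    (A₁ : Matrix (Fin (2 * m₀)) (Fin (2 * m₀)) ℝ)
    (A₂ : Matrix (Fin (2 * m₀)) (Fin r) ℝ)
    (A₃ : Matrix (Fin r) (Fin r) ℝ)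
    (hskew : (Matrix.fromBlocks A₁ A₂ (-A₂ᵀ) A₃)ᵀ = -(Matrix.fromBlocks A₁ A₂ (-A₂ᵀ) A₃))
    (hrank : (Matrix.fromBlocks A₁ A₂ (-A₂ᵀ) A₃).rank = 2 * m₀)
    (hA₁ : IsUnit A₁.det)
    (p : ℝ) (hp : p ≠ 0) (B : Matrix (Fin (2 * m₀)) (Fin (2 * m₀)) ℝ)
    (hB : B * A₁ = p • (1 : Matrix (Fin (2 * m₀)) (Fin (2 * m₀)) ℝ))
    (v : Fin r → (Fin (2 * m₀) ⊕ Fin r → ℝ))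
    (hv : ∀ i, v i = Sum.elim (-((B * A₂).mulVec (Pi.single i 1))) (p • (Pi.single i 1 : Fin r → ℝ))) :
    LinearIndependent ℝ v ∧
      Submodule.span ℝ (Set.range v)
        = LinearMap.ker (Matrix.fromBlocks A₁ A₂ (-A₂ᵀ) A₃).mulVecLin := by
  set A := Matrix.fromBlocks A₁ A₂ (-A₂ᵀ) A₃ with hAdef
  set K := LinearMap.ker A.mulVecLin with hKdef
  have hA₁inj : Function.Injective A₁.mulVec :=
    mulVec_injective_iff_isUnit.2 ((isUnit_iff_isUnit_det A₁).2 hA₁)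
  have hA₁B : A₁ * B = p • (1 : Matrix (Fin (2 * m₀)) (Fin (2 * m₀)) ℝ) := by
    calc A₁ * B = A₁ * B * (A₁ * A₁⁻¹) := by rw [mul_nonsing_inv _ hA₁, mul_one]
    _ = A₁ * (B * A₁) * A₁⁻¹ := by noncomm_ring
    _ = p • (A₁ * A₁⁻¹) := by rw [hB]; simp [Matrix.mul_smul, Matrix.smul_mul]
    _ = _ := by rw [mul_nonsing_inv _ hA₁]
  -- finrank of kernel
  have hfrK : Module.finrank ℝ K = r := by
    rw [hKdef]
    have h1 := LinearMap.finrank_range_add_finrank_ker A.mulVecLin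
    rw [Module.finrank_fintype_fun_eq_card] at h1
    simp only [Fintype.card_sum, Fintype.card_fin] at h1
    rw [show Module.finrank ℝ ↥(LinearMap.range A.mulVecLin) = A.rank from rfl, hrank] at h1
    omega
  -- projection to the second block, restricted to K
  let f : K →ₗ[ℝ] (Fin r → ℝ) := (LinearMap.funLeft ℝ ℝ Sum.inr).comp K.subtype
  have hfinj : Function.Injective f := by
    rw [← LinearMap.ker_eq_bot, LinearMap.ker_eq_bot']
    rintro ⟨x, hx⟩ hfx
    have hx0 : x ∘ Sum.inr = 0 := hfx
    rw [LinearMap.mem_ker, Matrix.mulVecLin_apply, hAdef, fromBlocks_mulVec] at hx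
    have htop : A₁ *ᵥ (x ∘ Sum.inl) + A₂ *ᵥ (x ∘ Sum.inr) = 0 := by
      funext j; exact congrFun hx (Sum.inl j)
    rw [hx0, Matrix.mulVec_zero, add_zero] at htop
    have : x ∘ Sum.inl = 0 := hA₁inj (by rw [htop, Matrix.mulVec_zero])
    ext j
    cases j with
    | inl j => exact congrFun this j
    | inr j => exact congrFun hx0 j
  have hfsurj : Function.Surjective f := by
    have : Module.finrank ℝ K = Module.finrank ℝ (Fin r → ℝ) := by
      rw [hfrK, Module.finrank_fintype_fun_eq_card, Fintype.card_fin]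
    exact (LinearMap.injective_iff_surjective_of_finrank_eq_finrank this).1 hfinj
  -- each v i is in the kernel
  have hmem : ∀ i, v i ∈ K := by
    intro i
    obtain ⟨⟨x, hxK⟩, hx⟩ := hfsurj (p • (Pi.single i 1 : Fin r → ℝ))
    have hxinr : x ∘ Sum.inr = p • (Pi.single i 1 : Fin r → ℝ) := hx
    have hxmul : A *ᵥ x = 0 := hxK
    rw [hAdef, fromBlocks_mulVec] at hxmul
    have htop : A₁ *ᵥ (x ∘ Sum.inl) + A₂ *ᵥ (x ∘ Sum.inr) = 0 := by
      funext j; exact congrFun hxmul (Sum.inl j)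
    have hveq : v i = x := by
      have hx1 : A₁ *ᵥ (x ∘ Sum.inl) = -(A₂ *ᵥ (x ∘ Sum.inr)) :=
        eq_neg_of_add_eq_zero_left htop
      have hinl : v i ∘ Sum.inl = x ∘ Sum.inl := by
        apply hA₁inj
        rw [hx1, hv i]
        show A₁ *ᵥ (-((B * A₂) *ᵥ Pi.single i 1)) = _
        rw [Matrix.mulVec_neg, Matrix.mulVec_mulVec, ← Matrix.mul_assoc, hA₁B, hxinr]
        simp [Matrix.smul_mulVec, Matrix.mulVec_smul]
        rfl
      funext j
      cases j with
      | inl j => exact congrFun hinl j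
      | inr j =>
        rw [hv i]
        exact (congrFun hxinr j).symm
    rw [hveq]; exact hxK
  -- linear independence
  have hli : LinearIndependent ℝ v := by
    have hcomp : (LinearMap.funLeft ℝ ℝ Sum.inr) ∘ v
        = fun i => (fun _ : Fin r => Units.mk0 p hp) i • (Pi.basisFun ℝ (Fin r)) i := by
      funext i
      simp [hv i, LinearMap.funLeft, Pi.basisFun_apply]
    apply LinearIndependent.of_comp (LinearMap.funLeft ℝ ℝ Sum.inr)
    rw [hcomp]
    exact (Pi.basisFun ℝ (Fin r)).linearIndependent.units_smul _
  refine ⟨hli, ?_⟩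
  have hle : Submodule.span ℝ (Set.range v) ≤ K := by
    rw [Submodule.span_le]
    rintro _ ⟨i, rfl⟩
    exact hmem i
  refine Submodule.eq_of_le_of_finrank_le hle ?_
  rw [hfrK, finrank_span_eq_card hli, Fintype.card_fin]
end
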